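/- Let n ≥ m ≥ 2 be integers and let k be an integer satisfying either 0 ≤ k ≤ n+2, or k = n+3 and (n,m) ∈ {(2,2),(3,2),(4,2)}. Then the inequality (in ℚ) n + 2 − k + (m+n+2)/(mn−1) ≤ 9/(mn−1) holds if and only if the triple (n,m,k) belongs to the set {(2,2,3),(2,2,4),(2,2,5),(3,2,5),(3,2,6),(4,2,6),(4,2,7),(5,2,7),(3,3,5),(4,3,6)}. -/

import Mathlib

/-- Lemma 3.1 (first part): for integers `n ≥ m ≥ 2` and `k` with either
`0 ≤ k ≤ n+2`, or `k = n+3` and `(n,m) ∈ {(2,2),(3,2),(4,2)}`, the inequality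
`n + 2 - k + (m+n+2)/(mn-1) ≤ 9/(mn-1)` (in `ℚ`) holds iff `(n,m,k)` is one of
the ten listed triples. -/
theorem stmt_0 (n m k : ℤ) (hm : 2 ≤ m) (hnm : m ≤ n)
    (hk : (0 ≤ k ∧ k ≤ n + 2) ∨
      (k = n + 3 ∧ ((n, m) = (2, 2) ∨ (n, m) = (3, 2) ∨ (n, m) = (4, 2)))) :
    (n : ℚ) + 2 - k + ((m : ℚ) + n + 2) / ((m : ℚ) * n - 1) ≤ 9 / ((m : ℚ) * n - 1) ↔
      (n, m, k) ∈ ({(2, 2, 3), (2, 2, 4), (2, 2, 5), (3, 2, 5), (3, 2, 6),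
        (4, 2, 6), (4, 2, 7), (5, 2, 7), (3, 3, 5), (4, 3, 6)} : Set (ℤ × ℤ × ℤ)) := by
  have hq : (0:ℚ) < (m : ℚ) * n - 1 := by
    have h1 : (2:ℚ) ≤ (m:ℚ) := by exact_mod_cast hm
    have h2 : (m:ℚ) ≤ (n:ℚ) := by exact_mod_cast hnm
    nlinarith
  have e : (n : ℚ) + 2 - k + ((m : ℚ) + n + 2) / ((m : ℚ) * n - 1)
      = (((n:ℚ) + 2 - k) * ((m:ℚ) * n - 1) + ((m:ℚ) + n + 2)) / ((m : ℚ) * n - 1) := by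
    exact add_div' _ _ _ hq.ne'
  have key : ((n : ℚ) + 2 - k + ((m : ℚ) + n + 2) / ((m : ℚ) * n - 1) ≤ 9 / ((m : ℚ) * n - 1))
      ↔ (n + 2 - k) * (m * n - 1) + (m + n + 2) ≤ (9 : ℤ) := by
    rw [e, div_le_div_iff_of_pos_right hq]
    constructor
    · intro h; exact_mod_cast h
    · intro h; exact_mod_cast h
  rw [key]
  simp only [Set.mem_insert_iff, Set.mem_singleton_iff, Prod.mk.injEq] at hk ⊢
  rcases hk with ⟨hk0, hk1⟩ | ⟨rfl, ⟨rfl, rfl⟩ | ⟨rfl, rfl⟩ | ⟨rfl, rfl⟩⟩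
  · constructor
    · intro h
      have hd : 0 ≤ n + 2 - k := by omega
      have hq3 : 3 ≤ m * n - 1 := by nlinarith
      have hmn7 : m + n ≤ 7 := by nlinarith
      have hn : n ≤ 5 := by omega
      have hm3 : m ≤ 3 := by omega
      interval_cases m <;> interval_cases n <;> omega
    · intro h
      rcases h with ⟨rfl,rfl,rfl⟩|⟨rfl,rfl,rfl⟩|⟨rfl,rfl,rfl⟩|⟨rfl,rfl,rfl⟩|⟨rfl,rfl,rfl⟩|
        ⟨rfl,rfl,rfl⟩|⟨rfl,rfl,rfl⟩|⟨rfl,rfl,rfl⟩|⟨rfl,rfl,rfl⟩|⟨rfl,rfl,rfl⟩ <;> norm_num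
  · omega
  · omega
  · omega
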